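/- Let Π be a real random variable with E[Π] = r' := Φ⁻¹(ε') + √(2Vε'/(ε'−ε)) (or more generally E[Π] ≥ r') and Var(Π) ≤ V, where 0 < ε < ε' < 1 and V > 0. Then E[Φ(Π)] > ε. -/

import Mathlib

open MeasureTheory ProbabilityTheory

/-- Standard Gaussian density. -/
noncomputable def gaussPDF (x : ℝ) : ℝ := Real.exp (-(x ^ 2) / 2) / Real.sqrt (2 * Real.pi)

/-- Standard Gaussian CDF. -/
noncomputable def gaussCDF (x : ℝ) : ℝ := ∫ t in Set.Iic x, gaussPDF t

lemma gaussPDF_nonneg (x : ℝ) : 0 ≤ gaussPDF x :=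
  div_nonneg (Real.exp_pos _).le (Real.sqrt_nonneg _)

lemma gaussPDF_eq (x : ℝ) :
    gaussPDF x = Real.exp (-(1/2) * x ^ 2) / Real.sqrt (2 * Real.pi) := by
  unfold gaussPDF; ring_nf

lemma gaussPDF_integrable : Integrable gaussPDF := by
  have h : Integrable (fun x : ℝ => Real.exp (-(1/2) * x ^ 2)) :=
    integrable_exp_neg_mul_sq (by norm_num)
  have h2 := h.div_const (Real.sqrt (2 * Real.pi))
  refine h2.congr (Filter.Eventually.of_forall fun x => ?_)
  exact (gaussPDF_eq x).symm

lemma gaussPDF_integral : ∫ x, gaussPDF x = 1 := by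
  simp only [gaussPDF_eq]
  rw [integral_div, integral_gaussian]
  rw [div_eq_one_iff_eq (by positivity)]
  rw [show Real.pi / (1/2) = 2 * Real.pi by ring]

lemma gaussCDF_mono : Monotone gaussCDF := fun a b hab =>
  setIntegral_mono_set gaussPDF_integrable.integrableOn
    (Filter.Eventually.of_forall gaussPDF_nonneg)
    (HasSubset.Subset.eventuallyLE (Set.Iic_subset_Iic.2 hab))

lemma gaussCDF_nonneg (x : ℝ) : 0 ≤ gaussCDF x :=
  setIntegral_nonneg measurableSet_Iic fun t _ => gaussPDF_nonneg t

lemma gaussCDF_le_one (x : ℝ) : gaussCDF x ≤ 1 := by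
  calc gaussCDF x ≤ ∫ t, gaussPDF t :=
        setIntegral_le_integral gaussPDF_integrable
          (Filter.Eventually.of_forall gaussPDF_nonneg)
    _ = 1 := gaussPDF_integral

/-- If `Π` has mean at least `Φ⁻¹(ε') + √(2Vε'/(ε'−ε))` and variance at most `V`,
where `0 < ε < ε' < 1` and `V > 0`, then `E[Φ(Π)] > ε`.  Here `q` plays the role of
`Φ⁻¹(ε')`, i.e. `Φ(q) = ε'`. -/
theorem stmt6 {ε ε' V : ℝ} (hε : 0 < ε) (hεε' : ε < ε') (hε' : ε' < 1) (hV : 0 < V)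
    {q : ℝ} (hq : gaussCDF q = ε')
    (μ : Measure ℝ) [IsProbabilityMeasure μ] (hL2 : MemLp id 2 μ)
    (hmean : q + Real.sqrt (2 * V * ε' / (ε' - ε)) ≤ ∫ x, x ∂μ)
    (hvar : variance id μ ≤ V) :
    ε < ∫ x, gaussCDF x ∂μ := by
  have hε'pos : (0:ℝ) < ε' := hε.trans hεε'
  have hεε : (0:ℝ) < ε' - ε := sub_pos.2 hεε'
  set m := ∫ x, x ∂μ with hm
  set r := Real.sqrt (2 * V * ε' / (ε' - ε)) with hr
  have hrpos : 0 < r := Real.sqrt_pos.2 (by positivity)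
  have hr2 : r ^ 2 = 2 * V * ε' / (ε' - ε) := Real.sq_sqrt (by positivity)
  have hc : 0 < m - q := by linarith
  set t := (ε' - ε) / (2 * ε') with htdef
  have ht : V / r ^ 2 = t := by
    rw [hr2, htdef]
    field_simp
  -- Chebyshev
  have cheb := meas_ge_le_variance_div_sq (μ := μ) (X := id) hL2 hc
  have hsub : Set.Iic q ⊆ {ω : ℝ | m - q ≤ |id ω - μ[id]|} := by
    intro x hx
    have hx' : x ≤ q := hx
    have hid : μ[id] = m := by simp [hm, id]
    simp only [Set.mem_setOf_eq, id_eq, hid]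
    have : m - q ≤ m - x := by linarith
    calc m - q ≤ m - x := this
      _ ≤ |m - x| := le_abs_self _
      _ = |x - m| := abs_sub_comm _ _
  have hrq : r ≤ m - q := by linarith
  have hIic : μ (Set.Iic q) ≤ ENNReal.ofReal t := by
    refine le_trans (measure_mono hsub) (le_trans cheb ?_)
    apply ENNReal.ofReal_le_ofReal
    calc variance id μ / (m - q) ^ 2 ≤ V / (m - q) ^ 2 :=
          div_le_div_of_nonneg_right hvar (by positivity)
      _ ≤ V / r ^ 2 :=
          div_le_div_of_nonneg_left hV.le (by positivity)
            (pow_le_pow_left₀ hrpos.le hrq 2)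
      _ = t := ht
  have ht0 : 0 ≤ t := by positivity
  have hIic' : (μ (Set.Iic q)).toReal ≤ t :=
    ENNReal.toReal_le_of_le_ofReal ht0 hIic
  have hIoi : 1 - t ≤ (μ (Set.Ioi q)).toReal := by
    have hcompl : μ (Set.Ioi q) = 1 - μ (Set.Iic q) := by
      rw [← Set.compl_Iic, measure_compl measurableSet_Iic (measure_ne_top μ _), measure_univ]
    rw [hcompl, ENNReal.toReal_sub_of_le prob_le_one ENNReal.one_ne_top, ENNReal.toReal_one]
    linarith
  -- integral bound
  have hmeas : Measurable gaussCDF := gaussCDF_mono.measurable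
  have hint : Integrable gaussCDF μ := by
    refine (integrable_const (1:ℝ)).mono' hmeas.aestronglyMeasurable
      (Filter.Eventually.of_forall fun x => ?_)
    rw [Real.norm_eq_abs, abs_of_nonneg (gaussCDF_nonneg x)]
    exact gaussCDF_le_one x
  have hindint : Integrable ((Set.Ioi q).indicator (fun _ => ε')) μ :=
    (integrable_const ε').indicator measurableSet_Ioi
  have hptw : ∀ x, (Set.Ioi q).indicator (fun _ => ε') x ≤ gaussCDF x := by
    intro x
    by_cases hx : x ∈ Set.Ioi q
    · rw [Set.indicator_of_mem hx, ← hq]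
      exact gaussCDF_mono (le_of_lt hx)
    · rw [Set.indicator_of_notMem hx]
      exact gaussCDF_nonneg x
  have h1 : ∫ x, (Set.Ioi q).indicator (fun _ => ε') x ∂μ ≤ ∫ x, gaussCDF x ∂μ :=
    integral_mono hindint hint hptw
  have h2 : ∫ x, (Set.Ioi q).indicator (fun _ => ε') x ∂μ
      = (μ (Set.Ioi q)).toReal * ε' := by
    rw [integral_indicator_const _ measurableSet_Ioi, smul_eq_mul]
    rfl
  have h3 : ε' * (1 - t) = (ε' + ε) / 2 := by
    rw [htdef]; field_simp; ring
  have h4 : ε' * (1 - t) ≤ (μ (Set.Ioi q)).toReal * ε' := by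
    rw [mul_comm ((μ (Set.Ioi q)).toReal) ε']
    exact mul_le_mul_of_nonneg_left hIoi hε'pos.le
  have h5 : ε < (ε' + ε) / 2 := by linarith
  calc ε < (ε' + ε) / 2 := h5
    _ = ε' * (1 - t) := h3.symm
    _ ≤ (μ (Set.Ioi q)).toReal * ε' := h4
    _ = ∫ x, (Set.Ioi q).indicator (fun _ => ε') x ∂μ := h2.symm
    _ ≤ ∫ x, gaussCDF x ∂μ := h1
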